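/- Let (X, d) be a nonempty compact length space, p ≥ 1 a real number, and μ a p-dimensional Bishop measure on (X, d) with constants β ≥ 1 and η₀ > 0. Set C = β · 2^p and θ = η₀/2. Then for every 0 < r < θ and every α > 0 with αr < θ, one has α^{-p} C^{-2} · Cap(r, X) ≤ Cap(αr, X) ≤ α^{-p} C^{2} · Cap(r, X). -/

import Mathlib

open MeasureTheory Metric ENNReal

/-- A metric space is a *length space* if the distance between any two points equals the
infimum of the lengths (total variations) of continuous curves `γ : [0,1] → X` joining them. -/
def IsLengthSpace (X : Type*) [MetricSpace X] : Prop :=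
  ∀ x y : X, edist x y =
    ⨅ γ : {γ : ℝ → X // ContinuousOn γ (Set.Icc 0 1) ∧ γ 0 = x ∧ γ 1 = y},
      eVariationOn γ.1 (Set.Icc 0 1)

/-- A Borel measure `μ` on a metric space `X` is a `p`-dimensional *Bishop measure* with
constants `β ≥ 1` and `η₀ > 0` if `β⁻¹ η^p ≤ μ(B(x, η)) ≤ β η^p` for all `0 < η < η₀`
and all `x ∈ X`. -/
def IsBishopMeasure {X : Type*} [MetricSpace X] [MeasurableSpace X]
    (μ : Measure X) (p β η₀ : ℝ) : Prop :=
  ∀ x : X, ∀ η : ℝ, 0 < η → η < η₀ →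
    ENNReal.ofReal (β⁻¹ * η ^ p) ≤ μ (ball x η) ∧
      μ (ball x η) ≤ ENNReal.ofReal (β * η ^ p)

/-- `capNum ε X` is the largest cardinality of a family of pairwise disjoint open balls of
radius `ε` in `X`. -/
noncomputable def capNum (ε : ℝ) (X : Type*) [MetricSpace X] : ℕ :=
  sSup {k : ℕ | ∃ c : Fin k → X,
    Pairwise fun i j => Disjoint (Metric.ball (c i) ε) (Metric.ball (c j) ε)}

section Aux

variable {X : Type*} [MetricSpace X] [CompactSpace X] [Nonempty X]
    [MeasurableSpace X] [BorelSpace X]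

lemma capSet_zero_mem (ε : ℝ) : (0 : ℕ) ∈ {k : ℕ | ∃ c : Fin k → X,
    Pairwise fun i j => Disjoint (Metric.ball (c i) ε) (Metric.ball (c j) ε)} :=
  ⟨fun i => i.elim0, fun i => i.elim0⟩

lemma bishop_finite (μ : Measure X) (p β η₀ : ℝ) (hη₀ : 0 < η₀)
    (hμ : IsBishopMeasure μ p β η₀) : μ Set.univ ≠ ⊤ := by
  obtain ⟨t, ht⟩ := IsCompact.elim_finite_subcover (isCompact_univ (X := X))
    (fun x : X => ball x (η₀/2)) (fun x => isOpen_ball)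
    (by intro x _; exact Set.mem_iUnion.2 ⟨x, mem_ball_self (by linarith)⟩)
  have h : μ Set.univ ≤ ∑ x ∈ t, ENNReal.ofReal (β * (η₀/2) ^ p) := by
    calc μ Set.univ ≤ μ (⋃ x ∈ t, ball x (η₀/2)) := measure_mono ht
      _ ≤ ∑ x ∈ t, μ (ball x (η₀/2)) := measure_biUnion_finset_le t _
      _ ≤ _ := Finset.sum_le_sum fun x _ => (hμ x _ (by linarith) (by linarith)).2
  refine ne_top_of_le_ne_top ?_ h
  rw [Finset.sum_const, nsmul_eq_mul]
  exact ENNReal.mul_ne_top (ENNReal.natCast_ne_top _) ENNReal.ofReal_ne_top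

lemma count_upper (μ : Measure X) (p β η₀ : ℝ) (hμ : IsBishopMeasure μ p β η₀)
    (ε : ℝ) (hε : 0 < ε) (hεη : ε < η₀) (k : ℕ) (c : Fin k → X)
    (hc : Pairwise fun i j => Disjoint (Metric.ball (c i) ε) (Metric.ball (c j) ε)) :
    (k : ℝ≥0∞) * ENNReal.ofReal (β⁻¹ * ε ^ p) ≤ μ Set.univ := by
  have hm : μ (⋃ i, ball (c i) ε) = ∑' i, μ (ball (c i) ε) :=
    measure_iUnion hc fun i => measurableSet_ball
  calc (k : ℝ≥0∞) * ENNReal.ofReal (β⁻¹ * ε ^ p)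
      = ∑ _i : Fin k, ENNReal.ofReal (β⁻¹ * ε ^ p) := by
        rw [Finset.sum_const, Finset.card_univ, Fintype.card_fin, nsmul_eq_mul]
    _ ≤ ∑ i : Fin k, μ (ball (c i) ε) :=
        Finset.sum_le_sum fun i _ => (hμ (c i) ε hε hεη).1
    _ = μ (⋃ i, ball (c i) ε) := by rw [hm, tsum_fintype]
    _ ≤ μ Set.univ := measure_mono (Set.subset_univ _)

lemma count_upper_real (μ : Measure X) (p β η₀ : ℝ) (hη₀ : 0 < η₀)
    (hμ : IsBishopMeasure μ p β η₀)
    (ε : ℝ) (hε : 0 < ε) (hεη : ε < η₀) (k : ℕ) (c : Fin k → X)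
    (hc : Pairwise fun i j => Disjoint (Metric.ball (c i) ε) (Metric.ball (c j) ε)) :
    (k : ℝ) * (β⁻¹ * ε ^ p) ≤ (μ Set.univ).toReal := by
  have h := count_upper μ p β η₀ hμ ε hε hεη k c hc
  have h2 : ENNReal.ofReal ((k : ℝ) * (β⁻¹ * ε ^ p)) ≤ μ Set.univ := by
    rwa [ENNReal.ofReal_mul (by positivity), ENNReal.ofReal_natCast]
  exact (ENNReal.ofReal_le_iff_le_toReal (bishop_finite μ p β η₀ hη₀ hμ)).1 h2

lemma capSet_bddAbove (μ : Measure X) (p β η₀ : ℝ) (hβ : 1 ≤ β) (hη₀ : 0 < η₀)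
    (hμ : IsBishopMeasure μ p β η₀) (ε : ℝ) (hε : 0 < ε) (hεη : ε < η₀) :
    BddAbove {k : ℕ | ∃ c : Fin k → X,
      Pairwise fun i j => Disjoint (Metric.ball (c i) ε) (Metric.ball (c j) ε)} := by
  have hεp : (0:ℝ) < ε ^ p := Real.rpow_pos_of_pos hε p
  have hb : (0:ℝ) < β := by linarith
  have hL : 0 < β⁻¹ * ε ^ p := by positivity
  refine ⟨Nat.ceil ((μ Set.univ).toReal / (β⁻¹ * ε ^ p)), fun k hk => ?_⟩
  obtain ⟨c, hc⟩ := hk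
  have h := count_upper_real μ p β η₀ hη₀ hμ ε hε hεη k c hc
  have h2 : (k : ℝ) ≤ (μ Set.univ).toReal / (β⁻¹ * ε ^ p) := by
    rw [le_div_iff₀ hL]; exact h
  exact_mod_cast h2.trans (Nat.le_ceil _)

/-- The key two-sided estimate: for `0 < ε < η₀/2`,
`μ(X) ≤ Cap(ε) · β 2^p ε^p` and `Cap(ε) · β⁻¹ ε^p ≤ μ(X)`. -/
lemma cap_bounds (μ : Measure X) (p β η₀ : ℝ) (hβ : 1 ≤ β) (hη₀ : 0 < η₀)
    (hμ : IsBishopMeasure μ p β η₀) (ε : ℝ) (hε : 0 < ε) (hεθ : ε < η₀ / 2) :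
    (μ Set.univ).toReal ≤ (capNum ε X : ℝ) * (β * 2 ^ p * ε ^ p) ∧
      (capNum ε X : ℝ) * (β⁻¹ * ε ^ p) ≤ (μ Set.univ).toReal := by
  have hεη : ε < η₀ := by linarith
  have hbdd := capSet_bddAbove μ p β η₀ hβ hη₀ hμ ε hε hεη
  have hne : {k : ℕ | ∃ c : Fin k → X,
      Pairwise fun i j => Disjoint (Metric.ball (c i) ε) (Metric.ball (c j) ε)}.Nonempty :=
    ⟨0, capSet_zero_mem ε⟩
  have hmem := Nat.sSup_mem hne hbdd
  have hNdef : capNum ε X = sSup {k : ℕ | ∃ c : Fin k → X,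
      Pairwise fun i j => Disjoint (Metric.ball (c i) ε) (Metric.ball (c j) ε)} := rfl
  set N := capNum ε X with hN
  rw [← hNdef] at hmem
  obtain ⟨c, hc⟩ := hmem
  constructor
  · -- covering by balls of radius 2ε
    have hcover : (Set.univ : Set X) ⊆ ⋃ i, ball (c i) (2 * ε) := by
      intro x _
      by_contra hx
      simp only [Set.mem_iUnion, mem_ball, not_exists, not_lt] at hx
      -- extend the family by x
      have hmem' : N + 1 ∈ {k : ℕ | ∃ c : Fin k → X,
          Pairwise fun i j => Disjoint (Metric.ball (c i) ε) (Metric.ball (c j) ε)} := by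
        refine ⟨Fin.snoc c x, ?_⟩
        intro i j hij
        rcases eq_or_ne i (Fin.last _) with hi | hi
        · rcases eq_or_ne j (Fin.last _) with hj | hj
          · exact absurd (hi.trans hj.symm) hij
          · obtain ⟨j', rfl⟩ := Fin.exists_castSucc_eq.2 hj
            subst hi
            simp only [Fin.snoc_last, Fin.snoc_castSucc]
            exact ball_disjoint_ball (by linarith [hx j'])
        · obtain ⟨i', rfl⟩ := Fin.exists_castSucc_eq.2 hi
          rcases eq_or_ne j (Fin.last _) with hj | hj
          · subst hj
            simp only [Fin.snoc_last, Fin.snoc_castSucc]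
            refine ball_disjoint_ball ?_
            rw [dist_comm]
            linarith [hx i']
          · obtain ⟨j', rfl⟩ := Fin.exists_castSucc_eq.2 hj
            simp only [Fin.snoc_castSucc]
            exact hc fun h => hij (congrArg Fin.castSucc h)
      exact Nat.not_succ_le_self N (le_csSup hbdd hmem')
    have h2ε : 0 < 2 * ε := by linarith
    have h2εη : 2 * ε < η₀ := by linarith
    have hle : μ Set.univ ≤ (N : ℝ≥0∞) * ENNReal.ofReal (β * (2 * ε) ^ p) := by
      calc μ Set.univ ≤ μ (⋃ i, ball (c i) (2 * ε)) := measure_mono hcover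
        _ ≤ ∑' i, μ (ball (c i) (2 * ε)) := measure_iUnion_le _
        _ = ∑ i : Fin N, μ (ball (c i) (2 * ε)) := tsum_fintype _
        _ ≤ ∑ _i : Fin N, ENNReal.ofReal (β * (2 * ε) ^ p) :=
            Finset.sum_le_sum fun i _ => (hμ (c i) _ h2ε h2εη).2
        _ = (N : ℝ≥0∞) * ENNReal.ofReal (β * (2 * ε) ^ p) := by
            rw [Finset.sum_const, Finset.card_univ, Fintype.card_fin, nsmul_eq_mul]
    have hle2 : μ Set.univ ≤ ENNReal.ofReal ((N : ℝ) * (β * (2 * ε) ^ p)) := by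
      rwa [ENNReal.ofReal_mul (by positivity), ENNReal.ofReal_natCast]
    have h3 : (μ Set.univ).toReal ≤ (N : ℝ) * (β * (2 * ε) ^ p) :=
      ENNReal.toReal_le_of_le_ofReal (by positivity) hle2
    have hrw : (2 * ε) ^ p = 2 ^ p * ε ^ p :=
      Real.mul_rpow (by norm_num) hε.le
    rw [hrw] at h3
    calc (μ Set.univ).toReal ≤ (N : ℝ) * (β * (2 ^ p * ε ^ p)) := h3
      _ = (N : ℝ) * (β * 2 ^ p * ε ^ p) := by ring
  · exact count_upper_real μ p β η₀ hη₀ hμ ε hε hεη N c hc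

end Aux

/-- Corollary `CorollaryCapEstimation`. For a nonempty compact length space
`X` with a `p`-dimensional Bishop measure `μ` (`p ≥ 1`, constants `β ≥ 1`, `η₀ > 0`), setting
`C = β · 2^p` and `θ = η₀/2`, for all `0 < r < θ` and `α > 0` with `αr < θ` one has
`α^{-p} C^{-2} · Cap(r, X) ≤ Cap(αr, X) ≤ α^{-p} C^{2} · Cap(r, X)`. -/
theorem capNum_scaling {X : Type*} [MetricSpace X] [CompactSpace X] [Nonempty X]
    [MeasurableSpace X] [BorelSpace X]
    (hX : IsLengthSpace X) (μ : Measure X) (p β η₀ : ℝ)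
    (hp : 1 ≤ p) (hβ : 1 ≤ β) (hη₀ : 0 < η₀) (hμ : IsBishopMeasure μ p β η₀)
    (C θ : ℝ) (hC : C = β * (2 : ℝ) ^ p) (hθ : θ = η₀ / 2) :
    ∀ r α : ℝ, 0 < r → r < θ → 0 < α → α * r < θ →
      α ^ (-p) * (C ^ 2)⁻¹ * (capNum r X : ℝ) ≤ (capNum (α * r) X : ℝ) ∧
        (capNum (α * r) X : ℝ) ≤ α ^ (-p) * C ^ 2 * (capNum r X : ℝ) := by
  intro r α hr hrθ hα hαrθ
  subst hθ
  have hβ0 : (0:ℝ) < β := by linarith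
  have h2p : (1:ℝ) ≤ 2 ^ p := Real.one_le_rpow (by norm_num) (by linarith)
  have hC1 : 1 ≤ C := by rw [hC]; nlinarith
  have hC0 : 0 < C := by linarith
  have hβC : β ≤ C := by rw [hC]; nlinarith
  have hR : (0:ℝ) < r ^ p := Real.rpow_pos_of_pos hr p
  have hA : (0:ℝ) < α ^ p := Real.rpow_pos_of_pos hα p
  have hαr : 0 < α * r := by positivity
  obtain ⟨h1, h2⟩ := cap_bounds μ p β η₀ hβ hη₀ hμ r hr hrθ
  obtain ⟨h3, h4⟩ := cap_bounds μ p β η₀ hβ hη₀ hμ (α * r) hαr hαrθ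
  set m := (μ Set.univ).toReal with hm
  set N1 := (capNum r X : ℝ) with hN1
  set N2 := (capNum (α * r) X : ℝ) with hN2
  have hN1nn : 0 ≤ N1 := Nat.cast_nonneg _
  have hN2nn : 0 ≤ N2 := Nat.cast_nonneg _
  have hmul : (α * r) ^ p = α ^ p * r ^ p := Real.mul_rpow hα.le hr.le
  rw [hmul] at h3 h4
  have hneg : α ^ (-p) = (α ^ p)⁻¹ := Real.rpow_neg hα.le p
  rw [hneg, ← hC] at *
  -- h1 : m ≤ N1 * (C * r^p)
  -- h2 : N1 * (β⁻¹ * r^p) ≤ m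
  -- h3 : m ≤ N2 * (C * (α^p * r^p))
  -- h4 : N2 * (β⁻¹ * (α^p * r^p)) ≤ m
  have key1 : N1 * r ^ p ≤ β * m := by
    have := mul_le_mul_of_nonneg_left h2 hβ0.le
    calc N1 * r ^ p = β * (N1 * (β⁻¹ * r ^ p)) := by
          field_simp
      _ ≤ β * m := this
  have key2 : N2 * (α ^ p * r ^ p) ≤ β * m := by
    have := mul_le_mul_of_nonneg_left h4 hβ0.le
    calc N2 * (α ^ p * r ^ p) = β * (N2 * (β⁻¹ * (α ^ p * r ^ p))) := by
          field_simp
      _ ≤ β * m := this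
  have hm0 : 0 ≤ m := ENNReal.toReal_nonneg
  have hβm : β * m ≤ C * m := mul_le_mul_of_nonneg_right hβC hm0
  constructor
  · -- (α^p)⁻¹ * (C^2)⁻¹ * N1 ≤ N2
    have step : N1 * r ^ p ≤ N2 * (C ^ 2 * α ^ p) * r ^ p := by
      calc N1 * r ^ p ≤ β * m := key1
        _ ≤ C * m := hβm
        _ ≤ C * (N2 * (C * (α ^ p * r ^ p))) :=
            mul_le_mul_of_nonneg_left h3 hC0.le
        _ = N2 * (C ^ 2 * α ^ p) * r ^ p := by ring
    have hfin : N1 ≤ N2 * (C ^ 2 * α ^ p) := le_of_mul_le_mul_right step hR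
    have hrw : (α ^ p)⁻¹ * (C ^ 2)⁻¹ * N1 = N1 / (α ^ p * C ^ 2) := by
      field_simp
    rw [hrw, div_le_iff₀ (by positivity)]
    exact hfin.trans_eq (by ring)
  · -- N2 ≤ (α^p)⁻¹ * C^2 * N1
    have step : N2 * α ^ p * r ^ p ≤ C ^ 2 * N1 * r ^ p := by
      calc N2 * α ^ p * r ^ p = N2 * (α ^ p * r ^ p) := by ring
        _ ≤ β * m := key2
        _ ≤ C * m := hβm
        _ ≤ C * (N1 * (C * r ^ p)) := mul_le_mul_of_nonneg_left h1 hC0.le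
        _ = C ^ 2 * N1 * r ^ p := by ring
    have hfin : N2 * α ^ p ≤ C ^ 2 * N1 := le_of_mul_le_mul_right step hR
    calc N2 = (α ^ p)⁻¹ * (N2 * α ^ p) := by field_simp
      _ ≤ (α ^ p)⁻¹ * (C ^ 2 * N1) :=
          mul_le_mul_of_nonneg_left hfin (by positivity)
      _ = (α ^ p)⁻¹ * C ^ 2 * N1 := by ring
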